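/- Main identification theorem: under independence/exclusion, vector monotonicity, and full support of Z on {0,1}^J, for any weighting function c(g,z) satisfying Property M with P(C = 1) > 0, the conditional average treatment effect Δ_c = E[Y(1) − Y(0) | c(G, Z) = 1] equals E[h(Z)·Y] / E[h(Z)·D], where h(z) = λ'Σ^{−1}(Γ(z) − EΓ) and λ_S = E[c(g(S), Z)] for each nonempty S ⊆ {1,…,J}. -/

import Mathlib

open MeasureTheory ProbabilityTheory Matrix

/-- `Γ(z)`: the vector of subset products over nonempty subsets of `{1,…,J}`. -/
def GamB (J : ℕ) (z : Fin J → Bool) (S : {S : Finset (Fin J) // S.Nonempty}) : ℝ :=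
  ∏ j ∈ S.1, if z j then 1 else 0

/-- `E[Γ(Z)]`. -/
noncomputable def EGamB {Ω : Type*} [MeasurableSpace Ω] (μ : Measure Ω) {J : ℕ}
    (Z : Ω → Fin J → Bool) (S : {S : Finset (Fin J) // S.Nonempty}) : ℝ :=
  ∫ ω, GamB J (Z ω) S ∂μ

/-- `Σ = Var(Γ(Z))`. -/
noncomputable def SigB {Ω : Type*} [MeasurableSpace Ω] (μ : Measure Ω) {J : ℕ}
    (Z : Ω → Fin J → Bool) :
    Matrix {S : Finset (Fin J) // S.Nonempty} {S : Finset (Fin J) // S.Nonempty} ℝ :=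
  Matrix.of fun S T =>
    ∫ ω, (GamB J (Z ω) S - EGamB μ Z S) * (GamB J (Z ω) T - EGamB μ Z T) ∂μ

/-- `h(z) = λ'Σ⁻¹(Γ(z) − EΓ)`. -/
noncomputable def hB {Ω : Type*} [MeasurableSpace Ω] (μ : Measure Ω) {J : ℕ}
    (Z : Ω → Fin J → Bool) (lam : {S : Finset (Fin J) // S.Nonempty} → ℝ)
    (z : Fin J → Bool) : ℝ :=
  lam ⬝ᵥ ((SigB μ Z)⁻¹ *ᵥ fun S => GamB J z S - EGamB μ Z S)

/-- The indicator vector of a subset `S`. -/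
def chi {J : ℕ} (S : Finset (Fin J)) : Fin J → Bool := fun j => decide (j ∈ S)

/-- The Sperner family `F(g)` of a monotone boolean function `g`: its minimal
treatment-inducing sets of instruments. -/
def spernerOf {J : ℕ} (g : (Fin J → Bool) → Bool) : Finset (Finset (Fin J)) :=
  Finset.univ.filter fun S =>
    g (chi S) = true ∧ ∀ T ⊆ S, T ≠ S → g (chi T) = false

/-- The inclusion-exclusion coefficient `M_{F,S'} = ∑_{f ⊆ F, ∪f = S'} (−1)^{|f|+1}`. -/
def Mcoef {J : ℕ} (F : Finset (Finset (Fin J))) (S' : Finset (Fin J)) : ℝ :=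
  ∑ f ∈ F.powerset.filter (fun f => f.Nonempty ∧ f.sup id = S'),
    (-1 : ℝ) ^ (f.card + 1)

/-- Property M for a weighting function `c : G × Z → {0,1}`: `c` vanishes on
always-takers and never-takers, and for every other compliance group `g` the values
`c(g,·)` are the `M`-linear combination of the values at the simple groups `g(S)`. -/
def PropM {J : ℕ} {γ : Type*} (Dg : γ → (Fin J → Bool) → Bool)
    (gS : Finset (Fin J) → γ) (c : γ → (Fin J → Bool) → ℝ) : Prop :=
  (∀ g z, c g z = 0 ∨ c g z = 1) ∧
  (∀ g, Dg g = (fun _ => true) → ∀ z, c g z = 0) ∧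
  (∀ g, Dg g = (fun _ => false) → ∀ z, c g z = 0) ∧
  (∀ g, Dg g ≠ (fun _ => true) → Dg g ≠ (fun _ => false) → ∀ z,
    c g z = ∑ S' ∈ Finset.univ.filter (fun S' : Finset (Fin J) => S'.Nonempty),
      Mcoef (spernerOf (Dg g)) S' * c (gS S') z)

lemma aux_prod_ind {J : ℕ} (z : Fin J → Bool) (S : Finset (Fin J)) :
    (∏ j ∈ S, if z j then (1:ℝ) else 0) = if ∀ j ∈ S, z j = true then 1 else 0 := by
  by_cases h : ∀ j ∈ S, z j = true
  · rw [if_pos h]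
    exact Finset.prod_eq_one fun j hj => by rw [h j hj]; simp
  · rw [if_neg h]
    push_neg at h
    obtain ⟨j, hj, hjz⟩ := h
    exact Finset.prod_eq_zero hj (by simp [Bool.not_eq_true] at hjz; simp [hjz])

lemma aux_chi_le {J : ℕ} {S : Finset (Fin J)} {z : Fin J → Bool} (h : ∀ j ∈ S, z j = true) :
    chi S ≤ z := fun j => by
  by_cases hj : j ∈ S
  · simp [chi, hj, h j hj]
  · simp [chi, hj]

lemma aux_gz {J : ℕ} {g : (Fin J → Bool) → Bool} (hm : Monotone g) (z : Fin J → Bool) :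
    g z = true ↔ ∃ U ∈ spernerOf g, ∀ j ∈ U, z j = true := by
  classical
  constructor
  · intro hz
    set T : Finset (Fin J) := Finset.univ.filter (fun j => z j = true) with hT
    have hzT : z = chi T := by
      funext j; cases hzj : z j <;> simp [chi, hT, hzj]
    obtain ⟨U, hU, hUmin⟩ := Finset.exists_min_image
      (T.powerset.filter (fun U => g (chi U) = true)) Finset.card
      ⟨T, by simp [Finset.mem_filter, ← hzT, hz]⟩
    simp only [Finset.mem_filter, Finset.mem_powerset] at hU
    refine ⟨U, ?_, ?_⟩
    · simp only [spernerOf, Finset.mem_filter, Finset.mem_univ, true_and]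
      refine ⟨hU.2, fun V hVU hVne => ?_⟩
      by_contra hV
      rw [Bool.not_eq_false] at hV
      have hVmem : V ∈ T.powerset.filter (fun U => g (chi U) = true) :=
        Finset.mem_filter.2 ⟨Finset.mem_powerset.2 (hVU.trans hU.1), hV⟩
      have h1 := hUmin V hVmem
      have hlt : V.card < U.card :=
        Finset.card_lt_card (Finset.ssubset_iff_subset_ne.2 ⟨hVU, hVne⟩)
      omega
    · intro j hj
      have : j ∈ T := hU.1 hj
      simpa [hT] using this
  · rintro ⟨U, hU, hUz⟩
    simp only [spernerOf, Finset.mem_filter, Finset.mem_univ, true_and] at hU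
    have hle := hm (aux_chi_le hUz)
    rw [hU.1] at hle
    cases h2 : g z
    · rw [h2] at hle; exact absurd hle (by decide)
    · rfl

lemma aux_IE {J : ℕ} {g : (Fin J → Bool) → Bool} (hm : Monotone g)
    (h0 : g (chi (∅ : Finset (Fin J))) = false) (z : Fin J → Bool) :
    (if g z = true then (1:ℝ) else 0)
      = ∑ S' ∈ Finset.univ.filter (fun S' : Finset (Fin J) => S'.Nonempty),
          Mcoef (spernerOf g) S' * ∏ j ∈ S', (if z j then (1:ℝ) else 0) := by
  classical
  set F := spernerOf g with hF
  set T : Finset (Fin J) := Finset.univ.filter (fun j => z j = true) with hT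
  have hsubT : ∀ S' : Finset (Fin J), S' ⊆ T ↔ ∀ j ∈ S', z j = true := by
    intro S'; constructor
    · intro h j hj; have := h hj; simpa [hT] using this
    · intro h j hj; simp [hT, h j hj]
  have hFne : ∀ x ∈ F, x.Nonempty := by
    intro x hx
    rw [Finset.nonempty_iff_ne_empty]
    rintro rfl
    simp only [hF, spernerOf, Finset.mem_filter, Finset.mem_univ, true_and] at hx
    rw [hx.1] at h0; exact absurd h0 (by decide)
  set A := F.powerset.filter (fun f => f.Nonempty ∧ f.sup id ⊆ T) with hA
  have hmaps : ∀ f ∈ A, f.sup id ∈ Finset.univ.filter (fun S' : Finset (Fin J) => S'.Nonempty) := by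
    intro f hf
    simp only [hA, Finset.mem_filter, Finset.mem_powerset] at hf
    obtain ⟨x, hx⟩ := hf.2.1
    simp only [Finset.mem_filter, Finset.mem_univ, true_and]
    exact (hFne x (hf.1 hx)).mono (Finset.le_sup (f := id) hx)
  have step1 : (∑ S' ∈ Finset.univ.filter (fun S' : Finset (Fin J) => S'.Nonempty),
          Mcoef F S' * ∏ j ∈ S', (if z j then (1:ℝ) else 0))
      = ∑ f ∈ A, (-1:ℝ) ^ (f.card + 1) := by
    rw [← Finset.sum_fiberwise_of_maps_to hmaps (fun f => (-1:ℝ)^(f.card+1))]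
    refine Finset.sum_congr rfl fun S' hS' => ?_
    rw [aux_prod_ind]
    by_cases hST : S' ⊆ T
    · have hset : A.filter (fun f => f.sup id = S')
          = F.powerset.filter (fun f => f.Nonempty ∧ f.sup id = S') := by
        ext f
        simp only [hA, Finset.mem_filter, Finset.mem_powerset]
        constructor
        · rintro ⟨⟨hf, hne, _⟩, hsup⟩; exact ⟨hf, hne, hsup⟩
        · rintro ⟨hf, hne, hsup⟩; exact ⟨⟨hf, hne, hsup ▸ hST⟩, hsup⟩
      rw [if_pos ((hsubT S').1 hST), mul_one, Mcoef, ← hset]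
    · rw [if_neg (fun h => hST ((hsubT S').2 h)), mul_zero]
      symm
      refine Finset.sum_eq_zero fun f hf => ?_
      simp only [hA, Finset.mem_filter, Finset.mem_powerset] at hf
      exact absurd (hf.2 ▸ hf.1.2.2) hST
  rw [step1]
  set s := F.filter (· ⊆ T) with hs
  have hA2 : A = s.powerset.filter (·.Nonempty) := by
    ext f
    simp only [hA, hs, Finset.mem_filter, Finset.mem_powerset]
    constructor
    · rintro ⟨hf, hne, hsup⟩
      refine ⟨fun x hx => Finset.mem_filter.2 ⟨hf hx, ?_⟩, hne⟩
      exact Finset.Subset.trans (Finset.le_sup (f := id) hx) hsup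
    · rintro ⟨hf, hne⟩
      refine ⟨fun x hx => (Finset.mem_filter.1 (hf hx)).1, hne, ?_⟩
      exact Finset.sup_le_iff.2 fun x hx => (Finset.mem_filter.1 (hf hx)).2
  have hpow : (∑ m ∈ s.powerset, (-1:ℝ)^m.card) = if s = ∅ then 1 else 0 := by
    have h1 := Finset.sum_powerset_neg_one_pow_card (x := s)
    have h2 : ((∑ m ∈ s.powerset, (-1:ℤ)^m.card : ℤ) : ℝ) = ∑ m ∈ s.powerset, (-1:ℝ)^m.card := by
      push_cast; rfl
    rw [← h2, h1]
    split <;> simp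
  have hA3 : s.powerset.filter (·.Nonempty) = s.powerset.erase ∅ := by
    ext f
    simp [Finset.nonempty_iff_ne_empty, and_comm]
  have step2 : (∑ f ∈ A, (-1:ℝ) ^ (f.card + 1)) = 1 - (if s = ∅ then 1 else 0) := by
    rw [hA2, hA3]
    have h4 : (∑ f ∈ s.powerset.erase ∅, (-1:ℝ) ^ (f.card + 1)) + (-1:ℝ)^(Finset.card (∅ : Finset (Finset (Fin J))) + 1)
        = ∑ f ∈ s.powerset, (-1:ℝ)^(f.card+1) :=
      Finset.sum_erase_add _ _ (Finset.empty_mem_powerset s)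
    have h5 : (∑ f ∈ s.powerset, (-1:ℝ)^(f.card+1)) = -∑ m ∈ s.powerset, (-1:ℝ)^m.card := by
      rw [← Finset.sum_neg_distrib]
      exact Finset.sum_congr rfl fun f _ => by ring
    rw [hpow] at h5
    rw [h5] at h4
    simp only [Finset.card_empty, zero_add, pow_one] at h4
    linarith
  rw [step2]
  have hgz : g z = true ↔ s.Nonempty := by
    rw [aux_gz hm z]
    rw [hs, Finset.filter_nonempty_iff]
    constructor
    · rintro ⟨U, hU, hUz⟩; exact ⟨U, hU, (hsubT U).2 hUz⟩
    · rintro ⟨U, hU, hUT⟩; exact ⟨U, hU, (hsubT U).1 hUT⟩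
  by_cases hg : g z = true
  · rw [if_pos hg, if_neg (Finset.nonempty_iff_ne_empty.1 (hgz.1 hg))]; ring
  · rw [if_neg hg]
    have : s = ∅ := by
      by_contra hne
      exact hg (hgz.2 (Finset.nonempty_iff_ne_empty.2 hne))
    rw [if_pos this]; ring


/-- Theorem 1 (main identification result, for average treatment effects): under
independence/exclusion, vector monotonicity, and full support of `Z` on `{0,1}^J`,
for any weighting function `c` satisfying Property M with `P(c(G,Z) = 1) > 0`,
`E[Y(1) − Y(0) | c(G,Z) = 1] = E[h(Z)·Y] / E[h(Z)·D]` where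
`h(z) = λ'Σ⁻¹(Γ(z) − EΓ)` and `λ_S = E[c(g(S), Z)]`. -/
theorem stmt13 {Ω : Type*} [MeasurableSpace Ω] (μ : Measure Ω) [IsProbabilityMeasure μ]
    {J : ℕ} (Z : Ω → Fin J → Bool) (hZm : Measurable Z)
    (hfull : ∀ z : Fin J → Bool, 0 < μ {ω | Z ω = z})
    {γ : Type*} [Fintype γ] [MeasurableSpace γ] [MeasurableSingletonClass γ]
    (G : Ω → γ) (hGm : Measurable G)
    (Dg : γ → (Fin J → Bool) → Bool) (hVM : ∀ g, Monotone (Dg g))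
    (gS : Finset (Fin J) → γ)
    (hgS : ∀ S z, Dg (gS S) z = decide (∀ j ∈ S, z j = true))
    (Y1 Y0 : Ω → ℝ) (hY1m : Measurable Y1) (hY0m : Measurable Y0)
    (hY1i : Integrable Y1 μ) (hY0i : Integrable Y0 μ)
    (hindep : IndepFun (fun ω => (Y1 ω, Y0 ω, G ω)) Z μ)
    (c : γ → (Fin J → Bool) → ℝ) (hM : PropM Dg gS c)
    (hC : 0 < μ {ω | c (G ω) (Z ω) = 1}) :
    (μ {ω | c (G ω) (Z ω) = 1}).toReal⁻¹ *
        ∫ ω in {ω | c (G ω) (Z ω) = 1}, (Y1 ω - Y0 ω) ∂μ =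
      (∫ ω, hB μ Z (fun S => ∫ ω', c (gS S.1) (Z ω') ∂μ) (Z ω) *
          ((if Dg (G ω) (Z ω) = true then (1 : ℝ) else 0) * Y1 ω +
            (1 - if Dg (G ω) (Z ω) = true then (1 : ℝ) else 0) * Y0 ω) ∂μ) /
      (∫ ω, hB μ Z (fun S => ∫ ω', c (gS S.1) (Z ω') ∂μ) (Z ω) *
          (if Dg (G ω) (Z ω) = true then (1 : ℝ) else 0) ∂μ) := by
  classical
  set lam : {S : Finset (Fin J) // S.Nonempty} → ℝ :=
    fun S => ∫ ω', c (gS S.1) (Z ω') ∂μ with hlam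
  set p : (Fin J → Bool) → ℝ := fun z => (μ {ω | Z ω = z}).toReal with hp
  -- integrals of functions of Z as finite sums
  have hint : ∀ f : (Fin J → Bool) → ℝ, ∫ ω, f (Z ω) ∂μ = ∑ z, p z * f z := by
    intro f
    have : IsProbabilityMeasure (μ.map Z) := Measure.isProbabilityMeasure_map hZm.aemeasurable
    rw [← integral_map hZm.aemeasurable (measurable_of_countable f).aestronglyMeasurable,
      integral_fintype .of_finite]
    refine Finset.sum_congr rfl fun z _ => ?_
    rw [measureReal_def, Measure.map_apply hZm (measurableSet_singleton z)]
    simp [hp, Set.preimage, smul_eq_mul]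
  have hpsum : ∑ z, p z = 1 := by
    have h1 := hint (fun _ => (1:ℝ))
    simpa using h1.symm
  have hppos : ∀ z, 0 < p z := fun z =>
    ENNReal.toReal_pos (hfull z).ne' (measure_ne_top μ _)
  set d : {S : Finset (Fin J) // S.Nonempty} → (Fin J → Bool) → ℝ :=
    fun S z => GamB J z S - EGamB μ Z S with hd
  have hdsum : ∀ S, ∑ z, p z * d S z = 0 := by
    intro S
    have h1 : EGamB μ Z S = ∑ z, p z * GamB J z S := hint (fun z => GamB J z S)
    have h2 : ∑ z, p z * d S z
        = (∑ z, p z * GamB J z S) - (∑ z, p z) * EGamB μ Z S := by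
      rw [Finset.sum_mul, ← Finset.sum_sub_distrib]
      exact Finset.sum_congr rfl fun z _ => by simp only [hd]; ring
    rw [h2, ← h1, hpsum]; ring
  have hSig : ∀ S T, SigB μ Z S T = ∑ z, p z * (d S z * d T z) := by
    intro S T
    exact hint (fun z => d S z * d T z)
  -- the covariance matrix is nonsingular
  have hdet : IsUnit (SigB μ Z).det := by
    rw [isUnit_iff_ne_zero]
    intro h0
    obtain ⟨v, hv0, hv⟩ := Matrix.exists_mulVec_eq_zero_iff.2 h0
    have key : v ⬝ᵥ (SigB μ Z *ᵥ v) = ∑ z, p z * (∑ S, v S * d S z) ^ 2 := by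
      have e0 : v ⬝ᵥ (SigB μ Z *ᵥ v)
          = ∑ S, ∑ T, ∑ z, v S * ((p z * (d S z * d T z)) * v T) := by
        simp only [dotProduct, Matrix.mulVec]
        refine Finset.sum_congr rfl fun S _ => ?_
        rw [Finset.mul_sum]
        refine Finset.sum_congr rfl fun T _ => ?_
        rw [hSig, Finset.sum_mul, Finset.mul_sum]
      rw [e0]
      have e1 : ∀ S : {S : Finset (Fin J) // S.Nonempty},
          (∑ T, ∑ z, v S * ((p z * (d S z * d T z)) * v T))
            = ∑ z, ∑ T, v S * ((p z * (d S z * d T z)) * v T) :=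
        fun S => Finset.sum_comm
      simp only [e1]
      rw [Finset.sum_comm]
      refine Finset.sum_congr rfl fun z _ => ?_
      rw [sq, Finset.sum_mul_sum, Finset.mul_sum]
      refine Finset.sum_congr rfl fun S _ => ?_
      rw [Finset.mul_sum]
      refine Finset.sum_congr rfl fun T _ => by ring
    have hq : ∀ z, ∑ S, v S * d S z = 0 := by
      have h2 : ∑ z, p z * (∑ S, v S * d S z) ^ 2 = 0 := by
        rw [← key, hv, dotProduct_zero]
      intro z
      have h3 := (Finset.sum_eq_zero_iff_of_nonneg
        (fun z _ => mul_nonneg (hppos z).le (sq_nonneg _))).1 h2 z (Finset.mem_univ z)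
      rcases mul_eq_zero.1 h3 with h | h
      · exact absurd h (hppos z).ne'
      · exact pow_eq_zero_iff (two_ne_zero) |>.1 h
    -- linear independence of the subset products
    have hval : ∀ T : Finset (Fin J),
        (∑ S : {S : Finset (Fin J) // S.Nonempty}, v S * (if S.1 ⊆ T then (1:ℝ) else 0))
          = ∑ S, v S * EGamB μ Z S := by
      intro T
      have h1 := hq (chi T)
      have h2 : ∑ S : {S : Finset (Fin J) // S.Nonempty},
          (v S * GamB J (chi T) S - v S * EGamB μ Z S) = 0 := by
        rw [← h1]
        exact Finset.sum_congr rfl fun S _ => by simp only [hd]; ring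
      rw [Finset.sum_sub_distrib] at h2
      have h3 : ∀ S : {S : Finset (Fin J) // S.Nonempty},
          GamB J (chi T) S = if S.1 ⊆ T then (1:ℝ) else 0 := by
        intro S
        show (∏ j ∈ S.1, if chi T j then (1:ℝ) else 0) = _
        rw [aux_prod_ind]
        by_cases hST : S.1 ⊆ T
        · rw [if_pos (fun j hj => by simpa [chi] using hST hj), if_pos hST]
        · rw [if_neg (fun h => hST fun j hj => by simpa [chi] using h j hj), if_neg hST]
      calc (∑ S : {S : Finset (Fin J) // S.Nonempty}, v S * (if S.1 ⊆ T then (1:ℝ) else 0))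
          = ∑ S : {S : Finset (Fin J) // S.Nonempty}, v S * GamB J (chi T) S :=
            Finset.sum_congr rfl fun S _ => by rw [h3]
        _ = ∑ S, v S * EGamB μ Z S := by linarith [h2]
    have hk0 : ∑ S : {S : Finset (Fin J) // S.Nonempty}, v S * EGamB μ Z S = 0 := by
      rw [← hval ∅]
      refine Finset.sum_eq_zero fun S _ => ?_
      rw [if_neg, mul_zero]
      intro h
      exact absurd (Finset.subset_empty.1 h) (Finset.nonempty_iff_ne_empty.1 S.2)
    have hzero : ∀ T : Finset (Fin J), ∀ hT : T.Nonempty, v ⟨T, hT⟩ = 0 := by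
      intro T
      induction T using Finset.strongInductionOn with
      | _ T ih =>
        intro hT
        have h1 : (∑ S : {S : Finset (Fin J) // S.Nonempty},
            v S * (if S.1 ⊆ T then (1:ℝ) else 0)) = 0 := by rw [hval T, hk0]
        rw [Finset.sum_eq_single ⟨T, hT⟩] at h1
        · simpa using h1
        · rintro ⟨S, hS⟩ - hne
          by_cases hsub : S ⊆ T
          · have hss : S ⊂ T := Finset.ssubset_iff_subset_ne.2
              ⟨hsub, fun h => hne (Subtype.ext h)⟩
            simp [ih S hss hS]
          · simp [hsub]
        · intro h; exact absurd (Finset.mem_univ _) h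
    apply hv0
    funext S0
    simpa using hzero S0.1 S0.2
  have hinv : (SigB μ Z)⁻¹ * SigB μ Z = 1 := Matrix.nonsing_inv_mul _ hdet
  set a : {S : Finset (Fin J) // S.Nonempty} → ℝ := lam ᵥ* (SigB μ Z)⁻¹ with ha
  have hBrep : ∀ z, hB μ Z lam z = ∑ U, a U * d U z := by
    intro z
    show lam ⬝ᵥ ((SigB μ Z)⁻¹ *ᵥ fun S => GamB J z S - EGamB μ Z S) = _
    rw [Matrix.dotProduct_mulVec]
    rfl
  have hA0 : ∑ z, p z * hB μ Z lam z = 0 := by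
    simp only [hBrep]
    have e1 : ∑ z, p z * ∑ U, a U * d U z = ∑ z, ∑ U, a U * (p z * d U z) := by
      refine Finset.sum_congr rfl fun z _ => ?_
      rw [Finset.mul_sum]
      exact Finset.sum_congr rfl fun U _ => by ring
    rw [e1, Finset.sum_comm]
    refine Finset.sum_eq_zero fun U _ => ?_
    rw [← Finset.mul_sum, hdsum, mul_zero]
  have hA : ∀ T, ∑ z, p z * (hB μ Z lam z * GamB J z T) = lam T := by
    have hA1 : ∀ T, ∑ z, p z * (hB μ Z lam z * d T z) = lam T := by
      intro T
      have e1 : ∑ z, p z * (hB μ Z lam z * d T z)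
          = ∑ U, a U * ∑ z, p z * (d U z * d T z) := by
        simp only [hBrep]
        have e2 : ∀ z : Fin J → Bool, p z * ((∑ U, a U * d U z) * d T z)
            = ∑ U, a U * (p z * (d U z * d T z)) := by
          intro z
          rw [Finset.sum_mul, Finset.mul_sum]
          exact Finset.sum_congr rfl fun U _ => by ring
        simp only [e2]
        rw [Finset.sum_comm]
        exact Finset.sum_congr rfl fun U _ => by rw [← Finset.mul_sum]
      rw [e1]
      have e3 : ∀ U, ∑ z, p z * (d U z * d T z) = SigB μ Z U T := fun U => (hSig U T).symm
      simp only [e3]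
      have e4 : ∑ U, a U * SigB μ Z U T = (a ᵥ* SigB μ Z) T := rfl
      rw [e4, ha, Matrix.vecMul_vecMul, hinv, Matrix.vecMul_one]
    intro T
    have e5 : ∀ z : Fin J → Bool, p z * (hB μ Z lam z * GamB J z T)
        = p z * (hB μ Z lam z * d T z) + (p z * hB μ Z lam z) * EGamB μ Z T := by
      intro z
      simp only [hd]; ring
    simp only [e5]
    rw [Finset.sum_add_distrib, hA1, ← Finset.sum_mul, hA0, zero_mul, add_zero]
  -- group-level moment identity
  obtain ⟨hc01, hcat, hcnt, hcM⟩ := hM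
  have hlamS : ∀ (S' : Finset (Fin J)) (hS' : S'.Nonempty),
      lam ⟨S', hS'⟩ = ∑ z, p z * c (gS S') z := by
    intro S' hS'
    show (∫ ω', c (gS S') (Z ω') ∂μ) = _
    exact hint (fun z => c (gS S') z)
  have hDg1 : ∀ g : γ,
      ∑ z, p z * (hB μ Z lam z * (if Dg g z = true then (1:ℝ) else 0))
        = ∑ z, p z * c g z := by
    intro g
    by_cases hat : Dg g = fun _ => true
    · have h1 : ∀ z, Dg g z = true := fun z => congrFun hat z
      have h2 : ∀ z, c g z = 0 := hcat g hat
      calc ∑ z, p z * (hB μ Z lam z * (if Dg g z = true then (1:ℝ) else 0))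
          = ∑ z, p z * hB μ Z lam z :=
            Finset.sum_congr rfl fun z _ => by rw [h1 z, if_pos rfl, mul_one]
        _ = 0 := hA0
        _ = ∑ z, p z * c g z := by
            symm; exact Finset.sum_eq_zero fun z _ => by rw [h2 z, mul_zero]
    · by_cases hnt : Dg g = fun _ => false
      · have h1 : ∀ z, Dg g z = false := fun z => congrFun hnt z
        have h2 : ∀ z, c g z = 0 := hcnt g hnt
        refine Finset.sum_congr rfl fun z _ => ?_
        rw [h1 z, h2 z, if_neg (by simp), mul_zero, mul_zero]
      · have h0 : Dg g (chi (∅ : Finset (Fin J))) = false := by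
          cases hdg : Dg g (chi (∅ : Finset (Fin J)))
          · rfl
          · exfalso
            apply hat
            funext z
            have hle := hVM g (show chi (∅ : Finset (Fin J)) ≤ z from fun j => by simp [chi])
            rw [hdg] at hle
            cases h2 : Dg g z
            · rw [h2] at hle; exact absurd hle (by decide)
            · rfl
        have hIE := aux_IE (hVM g) h0
        calc ∑ z, p z * (hB μ Z lam z * (if Dg g z = true then (1:ℝ) else 0))
            = ∑ z, ∑ S' ∈ Finset.univ.filter (fun S' : Finset (Fin J) => S'.Nonempty),
                Mcoef (spernerOf (Dg g)) S'
                  * (p z * (hB μ Z lam z * ∏ j ∈ S', (if z j then (1:ℝ) else 0))) := by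
              refine Finset.sum_congr rfl fun z _ => ?_
              rw [hIE z, Finset.mul_sum, Finset.mul_sum]
              exact Finset.sum_congr rfl fun S' _ => by ring
          _ = ∑ S' ∈ Finset.univ.filter (fun S' : Finset (Fin J) => S'.Nonempty),
                Mcoef (spernerOf (Dg g)) S'
                  * ∑ z, p z * (hB μ Z lam z * ∏ j ∈ S', (if z j then (1:ℝ) else 0)) := by
              rw [Finset.sum_comm]
              exact Finset.sum_congr rfl fun S' _ => by rw [← Finset.mul_sum]
          _ = ∑ S' ∈ Finset.univ.filter (fun S' : Finset (Fin J) => S'.Nonempty),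
                Mcoef (spernerOf (Dg g)) S' * ∑ z, p z * c (gS S') z := by
              refine Finset.sum_congr rfl fun S' hS' => ?_
              have hS'ne : S'.Nonempty := (Finset.mem_filter.1 hS').2
              rw [← hlamS S' hS'ne, ← hA ⟨S', hS'ne⟩]
              rfl
          _ = ∑ z, p z * c g z := by
              have e1 : ∀ z : Fin J → Bool, p z * c g z
                  = ∑ S' ∈ Finset.univ.filter (fun S' : Finset (Fin J) => S'.Nonempty),
                      Mcoef (spernerOf (Dg g)) S' * (p z * c (gS S') z) := by
                intro z
                rw [hcM g hat hnt z, Finset.mul_sum]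
                exact Finset.sum_congr rfl fun S' _ => by ring
              symm
              simp only [e1]
              rw [Finset.sum_comm]
              exact Finset.sum_congr rfl fun S' _ => by rw [← Finset.mul_sum]
  -- independence and integrability toolkit
  set W : Ω → ℝ × ℝ × γ := fun ω => (Y1 ω, Y0 ω, G ω) with hW
  have hWm : Measurable W := hY1m.prodMk (hY0m.prodMk hGm)
  have hIndInt : ∀ f : ℝ × ℝ × γ → ℝ, Measurable f → ∀ k : (Fin J → Bool) → ℝ,
      ∫ ω, f (W ω) * k (Z ω) ∂μ = (∫ ω, f (W ω) ∂μ) * ∑ z, p z * k z := by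
    intro f hf k
    have hk : Measurable k := measurable_of_countable k
    have h1 : IndepFun (fun ω => f (W ω)) (fun ω => k (Z ω)) μ := hindep.comp hf hk
    rw [← hint k]
    exact h1.integral_fun_mul_eq_mul_integral ((hf.comp hWm).aestronglyMeasurable)
      ((hk.comp hZm).aestronglyMeasurable)
  have hki : ∀ (f : Ω → ℝ), Integrable f μ → ∀ k : (Fin J → Bool) → ℝ,
      Integrable (fun ω => f ω * k (Z ω)) μ := by
    intro f hf k
    have h1 : Integrable (fun ω => k (Z ω) * f ω) μ :=
      hf.bdd_mul (((measurable_of_countable k).comp hZm).aestronglyMeasurable)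
        (c := ∑ z, ‖k z‖) (Filter.Eventually.of_forall fun ω => Finset.single_le_sum (f := fun z => ‖k z‖)
          (fun _ _ => norm_nonneg _) (Finset.mem_univ _))
    exact h1.congr (Filter.Eventually.of_forall fun ω => mul_comm _ _)
  have hfW : ∀ g : γ, Integrable (fun ω => (if G ω = g then (1:ℝ) else 0) * (Y1 ω - Y0 ω)) μ := by
    intro g
    have hs : MeasurableSet {ω | G ω = g} := hGm (measurableSet_singleton g)
    have h1 := (hY1i.sub hY0i).indicator hs
    refine h1.congr (Filter.Eventually.of_forall fun ω => ?_)
    by_cases hg : G ω = g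
    · simp [Set.indicator_apply, hg]
    · simp [Set.indicator_apply, hg]
  have hGint : ∀ g : γ, Integrable (fun ω => (if G ω = g then (1:ℝ) else 0)) μ := by
    intro g
    have hs : MeasurableSet {ω | G ω = g} := hGm (measurableSet_singleton g)
    have h0 : Integrable (fun _ : Ω => (1:ℝ)) μ := integrable_const 1
    have h1 := h0.indicator hs
    refine h1.congr (Filter.Eventually.of_forall fun ω => ?_)
    by_cases hg : G ω = g
    · simp [Set.indicator_apply, hg]
    · simp [Set.indicator_apply, hg]
  have hegm : ∀ g : γ, Measurable (fun t : ℝ × ℝ × γ => (if t.2.2 = g then (1:ℝ) else 0)) := by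
    intro g
    have h1 : Measurable (fun t : ℝ × ℝ × γ => t.2.2) := measurable_snd.comp measurable_snd
    exact Measurable.ite (h1 (measurableSet_singleton g)) measurable_const measurable_const
  have hfgm : ∀ g : γ, Measurable
      (fun t : ℝ × ℝ × γ => (if t.2.2 = g then (1:ℝ) else 0) * (t.1 - t.2.1)) := by
    intro g
    exact (hegm g).mul (measurable_fst.sub (measurable_fst.comp measurable_snd))
  have hset : MeasurableSet {ω | c (G ω) (Z ω) = 1} := by
    have h1 : Measurable (fun ω => c (G ω) (Z ω)) :=
      (measurable_of_countable (fun q : γ × (Fin J → Bool) => c q.1 q.2)).comp (hGm.prodMk hZm)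
    exact h1 (measurableSet_singleton 1)
  -- the numerator
  have hNum : ∫ ω, hB μ Z lam (Z ω) *
        ((if Dg (G ω) (Z ω) = true then (1:ℝ) else 0) * Y1 ω +
          (1 - if Dg (G ω) (Z ω) = true then (1:ℝ) else 0) * Y0 ω) ∂μ
      = ∑ g : γ, (∫ ω, (if G ω = g then (1:ℝ) else 0) * (Y1 ω - Y0 ω) ∂μ)
          * (∑ z, p z * c g z) := by
    have hptw : ∀ ω, hB μ Z lam (Z ω) *
        ((if Dg (G ω) (Z ω) = true then (1:ℝ) else 0) * Y1 ω +
          (1 - if Dg (G ω) (Z ω) = true then (1:ℝ) else 0) * Y0 ω)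
        = (∑ g : γ, ((if G ω = g then (1:ℝ) else 0) * (Y1 ω - Y0 ω))
            * (hB μ Z lam (Z ω) * (if Dg g (Z ω) = true then (1:ℝ) else 0)))
          + Y0 ω * hB μ Z lam (Z ω) := by
      intro ω
      rw [Finset.sum_eq_single (G ω)]
      · rw [if_pos rfl]; ring
      · intro b _ hb
        rw [if_neg fun h => hb h.symm]
        ring
      · intro h; exact absurd (Finset.mem_univ _) h
    have hint1 : Integrable (fun ω => ∑ g : γ, ((if G ω = g then (1:ℝ) else 0) * (Y1 ω - Y0 ω))
        * (hB μ Z lam (Z ω) * (if Dg g (Z ω) = true then (1:ℝ) else 0))) μ := by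
      apply integrable_finset_sum
      intro g _
      exact hki _ (hfW g) (fun z => hB μ Z lam z * (if Dg g z = true then (1:ℝ) else 0))
    have hint2 : Integrable (fun ω => Y0 ω * hB μ Z lam (Z ω)) μ :=
      hki _ hY0i (fun z => hB μ Z lam z)
    rw [integral_congr_ae (Filter.Eventually.of_forall hptw), integral_add hint1 hint2,
      integral_finset_sum _ (fun g _ =>
        hki _ (hfW g) (fun z => hB μ Z lam z * (if Dg g z = true then (1:ℝ) else 0)))]
    have hz : ∫ ω, Y0 ω * hB μ Z lam (Z ω) ∂μ = 0 := by
      have h1 := hIndInt (fun t : ℝ × ℝ × γ => t.2.1) (measurable_fst.comp measurable_snd)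
        (fun z => hB μ Z lam z)
      rw [hA0, mul_zero] at h1
      exact h1
    rw [hz, add_zero]
    refine Finset.sum_congr rfl fun g _ => ?_
    have h1 := hIndInt (fun t : ℝ × ℝ × γ => (if t.2.2 = g then (1:ℝ) else 0) * (t.1 - t.2.1))
      (hfgm g) (fun z => hB μ Z lam z * (if Dg g z = true then (1:ℝ) else 0))
    rw [hDg1 g] at h1
    exact h1
  -- the denominator
  have hDen : ∫ ω, hB μ Z lam (Z ω) * (if Dg (G ω) (Z ω) = true then (1:ℝ) else 0) ∂μ
      = ∑ g : γ, (∫ ω, (if G ω = g then (1:ℝ) else 0) ∂μ) * (∑ z, p z * c g z) := by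
    have hptw : ∀ ω, hB μ Z lam (Z ω) * (if Dg (G ω) (Z ω) = true then (1:ℝ) else 0)
        = ∑ g : γ, (if G ω = g then (1:ℝ) else 0)
            * (hB μ Z lam (Z ω) * (if Dg g (Z ω) = true then (1:ℝ) else 0)) := by
      intro ω
      rw [Finset.sum_eq_single (G ω)]
      · rw [if_pos rfl]; ring
      · intro b _ hb; rw [if_neg fun h => hb h.symm]; ring
      · intro h; exact absurd (Finset.mem_univ _) h
    rw [integral_congr_ae (Filter.Eventually.of_forall hptw),
      integral_finset_sum _ (fun g _ =>
        hki _ (hGint g) (fun z => hB μ Z lam z * (if Dg g z = true then (1:ℝ) else 0)))]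
    refine Finset.sum_congr rfl fun g _ => ?_
    have h1 := hIndInt (fun t : ℝ × ℝ × γ => (if t.2.2 = g then (1:ℝ) else 0))
      (hegm g) (fun z => hB μ Z lam z * (if Dg g z = true then (1:ℝ) else 0))
    rw [hDg1 g] at h1
    exact h1
  -- collapsing double sums
  have hsingle : ∀ (g : γ) (z : Fin J → Bool),
      ∑ z', p z' * ((if z' = z then (1:ℝ) else 0) * c g z) = p z * c g z := by
    intro g z
    rw [Finset.sum_eq_single z]
    · rw [if_pos rfl]; ring
    · intro b _ hb; rw [if_neg hb]; ring
    · intro h; exact absurd (Finset.mem_univ _) h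
  -- the set integral
  have hI : ∫ ω in {ω | c (G ω) (Z ω) = 1}, (Y1 ω - Y0 ω) ∂μ
      = ∑ g : γ, (∫ ω, (if G ω = g then (1:ℝ) else 0) * (Y1 ω - Y0 ω) ∂μ)
          * (∑ z, p z * c g z) := by
    rw [← integral_indicator hset]
    have hptw : ∀ ω, Set.indicator {ω | c (G ω) (Z ω) = 1} (fun ω => Y1 ω - Y0 ω) ω
        = ∑ g : γ, ∑ z, ((if G ω = g then (1:ℝ) else 0) * (Y1 ω - Y0 ω))
            * ((if Z ω = z then (1:ℝ) else 0) * c g z) := by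
      intro ω
      have e1 : (∑ g : γ, ∑ z, ((if G ω = g then (1:ℝ) else 0) * (Y1 ω - Y0 ω))
            * ((if Z ω = z then (1:ℝ) else 0) * c g z))
          = (Y1 ω - Y0 ω) * c (G ω) (Z ω) := by
        rw [Finset.sum_eq_single (G ω)]
        · rw [Finset.sum_eq_single (Z ω)]
          · rw [if_pos rfl, if_pos rfl]; ring
          · intro b _ hb; rw [if_neg (show ¬ Z ω = b from fun h => hb h.symm)]; ring
          · intro h; exact absurd (Finset.mem_univ _) h
        · intro b _ hb
          refine Finset.sum_eq_zero fun z _ => ?_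
          rw [if_neg fun h => hb h.symm, zero_mul, zero_mul]
        · intro h; exact absurd (Finset.mem_univ _) h
      rw [Set.indicator_apply, e1]
      simp only [Set.mem_setOf_eq]
      by_cases hω : c (G ω) (Z ω) = 1
      · rw [if_pos hω, hω, mul_one]
      · have h0 : c (G ω) (Z ω) = 0 := (hc01 _ _).resolve_right hω
        rw [if_neg hω, h0, mul_zero]
    rw [integral_congr_ae (Filter.Eventually.of_forall hptw),
      integral_finset_sum _ (fun g _ => integrable_finset_sum _ (fun z _ =>
        hki _ (hfW g) (fun z' => (if z' = z then (1:ℝ) else 0) * c g z)))]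
    refine Finset.sum_congr rfl fun g _ => ?_
    rw [integral_finset_sum _ (fun z _ =>
      hki _ (hfW g) (fun z' => (if z' = z then (1:ℝ) else 0) * c g z)), Finset.mul_sum]
    refine Finset.sum_congr rfl fun z _ => ?_
    have h1 := hIndInt (fun t : ℝ × ℝ × γ => (if t.2.2 = g then (1:ℝ) else 0) * (t.1 - t.2.1))
      (hfgm g) (fun z' => (if z' = z then (1:ℝ) else 0) * c g z)
    rw [hsingle g z] at h1
    exact h1
  -- the probability of the conditioning event
  have hP : (μ {ω | c (G ω) (Z ω) = 1}).toReal
      = ∑ g : γ, (∫ ω, (if G ω = g then (1:ℝ) else 0) ∂μ) * (∑ z, p z * c g z) := by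
    rw [← measureReal_def, ← integral_indicator_one hset]
    have hptw : ∀ ω, Set.indicator {ω | c (G ω) (Z ω) = 1} (1 : Ω → ℝ) ω
        = ∑ g : γ, ∑ z, (if G ω = g then (1:ℝ) else 0)
            * ((if Z ω = z then (1:ℝ) else 0) * c g z) := by
      intro ω
      have e1 : (∑ g : γ, ∑ z, (if G ω = g then (1:ℝ) else 0)
            * ((if Z ω = z then (1:ℝ) else 0) * c g z))
          = c (G ω) (Z ω) := by
        rw [Finset.sum_eq_single (G ω)]
        · rw [Finset.sum_eq_single (Z ω)]
          · rw [if_pos rfl, if_pos rfl]; ring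
          · intro b _ hb; rw [if_neg (show ¬ Z ω = b from fun h => hb h.symm)]; ring
          · intro h; exact absurd (Finset.mem_univ _) h
        · intro b _ hb
          refine Finset.sum_eq_zero fun z _ => ?_
          rw [if_neg fun h => hb h.symm, zero_mul]
        · intro h; exact absurd (Finset.mem_univ _) h
      rw [Set.indicator_apply, e1]
      simp only [Set.mem_setOf_eq]
      by_cases hω : c (G ω) (Z ω) = 1
      · rw [if_pos hω, hω]; rfl
      · have h0 : c (G ω) (Z ω) = 0 := (hc01 _ _).resolve_right hω
        rw [if_neg hω, h0]
    rw [integral_congr_ae (Filter.Eventually.of_forall hptw),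
      integral_finset_sum _ (fun g _ => integrable_finset_sum _ (fun z _ =>
        hki _ (hGint g) (fun z' => (if z' = z then (1:ℝ) else 0) * c g z)))]
    refine Finset.sum_congr rfl fun g _ => ?_
    rw [integral_finset_sum _ (fun z _ =>
      hki _ (hGint g) (fun z' => (if z' = z then (1:ℝ) else 0) * c g z)), Finset.mul_sum]
    refine Finset.sum_congr rfl fun z _ => ?_
    have h1 := hIndInt (fun t : ℝ × ℝ × γ => (if t.2.2 = g then (1:ℝ) else 0))
      (hegm g) (fun z' => (if z' = z then (1:ℝ) else 0) * c g z)
    rw [hsingle g z] at h1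
    exact h1
  rw [hNum, hDen, hI, hP, div_eq_inv_mul]
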